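/- Let n ≥ 3, let (a,b) ⊆ ℝ be a (finite or infinite) open interval, and let G, P be monic real polynomials of degree n and Q a monic real polynomial of degree n+1, all of whose zeros are real and lie in (a,b), with the zeros of G and of Q simple. Denote the zeros of G by x_1 < ⋯ < x_n and the zeros of Q by y_1 < ⋯ < y_{n+1}, and assume Q ≺ G, i.e. y_1 < x_1 < y_2 < x_2 < ⋯ < y_n < x_n < y_{n+1}. Suppose there exist E ∈ ℝ and continuous functions A, B on (a,b) with A(x) > 0 for all x ∈ (a,b), such that A(x)P(x) = B(x)G(x) − (x−E)Q(x) for all x ∈ (a,b), with B(E) ≠ 0 and G and P having no common zero. Then at least n−2 zeros of P lie in pairwise distinct open intervals (x_k, x_{k+1}) whose endpoints are consecutive zeros of G. Moreover, if the zeros z_1 < ⋯ < z_n of P are all real and there is an index k' ∈ {1,…,n−1} with x_{k'} < z_{k'} < E < z_{k'+1} < x_{k'+1}, then the full interlacing x_1 < z_1 < x_2 < z_2 < ⋯ < x_{k'} < z_{k'} < E < z_{k'+1} < x_{k'+1} < ⋯ < z_n < x_n holds, i.e. (x−E)G(x) ≺ P(x). -/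

import Mathlib

open Polynomial


private lemma prod_neg_aux (w : ℕ → ℝ) (t : ℝ) (s : Finset ℕ) :
    ∏ i ∈ s, (t - w i) = (-1 : ℝ) ^ s.card * ∏ i ∈ s, (w i - t) := by
  induction s using Finset.induction with
  | empty => simp
  | insert _ _ hns ih =>
    rw [Finset.prod_insert hns, Finset.prod_insert hns, Finset.card_insert_of_notMem hns,
      pow_succ, ih]
    ring

private lemma neg_one_pow_mul_self (e : ℕ) : ((-1 : ℝ) ^ e) * (-1 : ℝ) ^ e = 1 := by
  rw [← pow_add]
  exact Even.neg_one_pow ⟨e, rfl⟩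

private lemma sign_prod (m j : ℕ) (w : ℕ → ℝ) (t : ℝ) (hj : j ≤ m)
    (hlt : ∀ i < j, w i < t) (hgt : ∀ i, j ≤ i → i < m → t < w i) :
    0 < (-1 : ℝ) ^ (m - j) * ∏ i ∈ Finset.range m, (t - w i) := by
  have hsplit : (∏ i ∈ Finset.range j, (t - w i)) * ∏ i ∈ Finset.Ico j m, (t - w i)
      = ∏ i ∈ Finset.range m, (t - w i) := by
    rw [Finset.range_eq_Ico, Finset.range_eq_Ico]
    exact Finset.prod_Ico_consecutive (fun i => t - w i) (Nat.zero_le j) hj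
  have h1 : 0 < ∏ i ∈ Finset.range j, (t - w i) :=
    Finset.prod_pos fun i hi => sub_pos.2 (hlt i (Finset.mem_range.1 hi))
  have h2 : 0 < ∏ i ∈ Finset.Ico j m, (w i - t) :=
    Finset.prod_pos fun i hi => sub_pos.2
      (hgt i (Finset.mem_Ico.1 hi).1 (Finset.mem_Ico.1 hi).2)
  have h3 := prod_neg_aux w t (Finset.Ico j m)
  rw [Nat.card_Ico] at h3
  rw [← hsplit, h3]
  have := neg_one_pow_mul_self (m - j)
  nlinarith [mul_pos h1 h2]

private lemma dc_eq_range (s : Finset ℕ) (h : ∀ j ∈ s, ∀ i < j, i ∈ s) :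
    s = Finset.range s.card := by
  ext i
  simp only [Finset.mem_range]
  constructor
  · intro hi
    have hsub : Finset.range (i + 1) ⊆ s := by
      intro j hj
      rcases Nat.lt_or_ge j i with h' | h'
      · exact h i hi j h'
      · have : j = i := le_antisymm (Nat.lt_succ_iff.1 (Finset.mem_range.1 hj)) h'
        exact this ▸ hi
    calc i < i + 1 := Nat.lt_succ_self i
      _ = (Finset.range (i + 1)).card := (Finset.card_range _).symm
      _ ≤ s.card := Finset.card_le_card hsub
  · intro hi
    by_contra hns
    have hsub : s ⊆ Finset.range i := by
      intro j hj
      rw [Finset.mem_range]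
      by_contra h'
      push_neg at h'
      rcases eq_or_lt_of_le h' with h'' | h''
      · exact hns (h'' ▸ hj)
      · exact hns (h j hj i h'')
    have := Finset.card_le_card hsub
    rw [Finset.card_range] at this
    omega

private lemma ivt_root (p : Polynomial ℝ) (u v : ℝ) (huv : u < v)
    (h : p.eval u * p.eval v < 0) :
    ∃ r : ℝ, p.eval r = 0 ∧ u < r ∧ r < v := by
  have hc : ContinuousOn (fun t : ℝ => p.eval t) (Set.Icc u v) :=
    p.continuous.continuousOn
  rcases lt_or_ge (p.eval u) 0 with hu | hu
  · have hv : 0 < p.eval v := by nlinarith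
    have := intermediate_value_Ioo (le_of_lt huv) hc
    obtain ⟨r, hr, hr0⟩ := this (Set.mem_Ioo.2 ⟨hu, hv⟩)
    exact ⟨r, hr0, hr.1, hr.2⟩
  · have hu' : 0 < p.eval u := lt_of_le_of_ne hu (by rintro h0; rw [← h0] at h; simp at h)
    have hv : p.eval v < 0 := by nlinarith
    have := intermediate_value_Ioo' (le_of_lt huv) hc
    obtain ⟨r, hr, hr0⟩ := this (Set.mem_Ioo.2 ⟨hv, hu'⟩)
    exact ⟨r, hr0, hr.1, hr.2⟩

private lemma eval_eq_prod (p : Polynomial ℝ) (m : ℕ) (w : ℕ → ℝ)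
    (hmono : ∀ i j : ℕ, i < j → j < m → w i < w j)
    (hm : p.Monic) (hdeg : p.natDegree = m)
    (hroots : ∀ r : ℝ, p.eval r = 0 ↔ ∃ i < m, w i = r) :
    ∀ t : ℝ, p.eval t = ∏ i ∈ Finset.range m, (t - w i) := by
  have hinj : Set.InjOn w (Finset.range m) := by
    intro i hi j hj hij
    simp only [Finset.coe_range, Set.mem_Iio] at hi hj
    by_contra hne
    rcases Nat.lt_or_ge i j with h' | h'
    · exact absurd hij (ne_of_lt (hmono i j h' hj))
    · exact absurd hij.symm (ne_of_lt (hmono j i (lt_of_le_of_ne h' (Ne.symm hne)) hi))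
  set q : Polynomial ℝ := ∏ i ∈ Finset.range m, (X - C (w i)) with hqdef
  have hq : q.Monic := monic_prod_of_monic _ _ fun i _ => monic_X_sub_C _
  have hqdeg : q.natDegree = m := by
    rw [hqdef, natDegree_prod_of_monic _ _ fun i _ => monic_X_sub_C _]
    simp
  have hpq : p = q := by
    by_contra hne
    have hd0 : p - q ≠ 0 := sub_ne_zero.2 hne
    have hdlt : (p - q).natDegree < m := by
      have hdeglt : (p - q).degree < p.degree := by
        apply Polynomial.degree_sub_lt
        · rw [Polynomial.degree_eq_natDegree hm.ne_zero, Polynomial.degree_eq_natDegree hq.ne_zero,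
            hdeg, hqdeg]
        · exact hm.ne_zero
        · rw [hm.leadingCoeff, hq.leadingCoeff]
      have := Polynomial.natDegree_lt_natDegree hd0 hdeglt
      omega
    have hr : ∀ i < m, (p - q).eval (w i) = 0 := by
      intro i hi
      have hp0 : p.eval (w i) = 0 := (hroots (w i)).2 ⟨i, hi, rfl⟩
      have hq0 : q.eval (w i) = 0 := by
        rw [hqdef, eval_prod]
        exact Finset.prod_eq_zero (Finset.mem_range.2 hi) (by simp)
      simp [hp0, hq0]
    have hsub : (Finset.range m).image w ⊆ (p - q).roots.toFinset := by
      intro r hr'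
      obtain ⟨i, hi, rfl⟩ := Finset.mem_image.1 hr'
      rw [Multiset.mem_toFinset, Polynomial.mem_roots hd0]
      exact hr i (Finset.mem_range.1 hi)
    have hcard : m ≤ (p - q).roots.toFinset.card := by
      have := Finset.card_le_card hsub
      rwa [Finset.card_image_of_injOn hinj, Finset.card_range] at this
    have := (p - q).roots.toFinset_card_le
    have := Polynomial.card_roots' (p - q)
    omega
  intro t
  rw [hpq, hqdef, eval_prod]
  simp


/-- Theorem 2.3 — same setup as Statement 3 (`Q` of degree `n+1`, `Q ≺ G`,
`A(x)P(x) = B(x)G(x) − (x−E)Q(x)` on `(a,b)`). Then at least `n−2` zeros of `P` lie in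
pairwise distinct intervals with endpoints consecutive zeros of `G`; and if the zeros
`z 0 < … < z (n-1)` of `P` are real and `x k < z k < E < z (k+1) < x (k+1)` for some
`k < n−1`, then the full interlacing `(x−E)G(x) ≺ P(x)` holds. -/
theorem stmt_4 (n : ℕ) (hn : 3 ≤ n) (a b : EReal)
    (G Q P : Polynomial ℝ) (E : ℝ) (A B : ℝ → ℝ)
    (x y : ℕ → ℝ)
    (hGmonic : G.Monic) (hGdeg : G.natDegree = n)
    (hPmonic : P.Monic) (hPdeg : P.natDegree = n)
    (hQmonic : Q.Monic) (hQdeg : Q.natDegree = n + 1)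
    (hPreal : P.roots.card = n)
    (hPab : ∀ r : ℝ, P.eval r = 0 → a < (r : EReal) ∧ (r : EReal) < b)
    (hx : ∀ i j : ℕ, i < j → j < n → x i < x j)
    (hy : ∀ i j : ℕ, i < j → j ≤ n → y i < y j)
    (hGroots : ∀ r : ℝ, G.eval r = 0 ↔ ∃ i < n, x i = r)
    (hQroots : ∀ r : ℝ, Q.eval r = 0 ↔ ∃ i ≤ n, y i = r)
    (hxab : ∀ i < n, a < (x i : EReal) ∧ (x i : EReal) < b)
    (hyab : ∀ i ≤ n, a < (y i : EReal) ∧ (y i : EReal) < b)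
    (hQG1 : ∀ i < n, y i < x i)
    (hQG2 : ∀ i < n, x i < y (i + 1))
    (hA : ContinuousOn A {t : ℝ | a < (t : EReal) ∧ (t : EReal) < b})
    (hB : ContinuousOn B {t : ℝ | a < (t : EReal) ∧ (t : EReal) < b})
    (hApos : ∀ t : ℝ, a < (t : EReal) → (t : EReal) < b → 0 < A t)
    (hrel : ∀ t : ℝ, a < (t : EReal) → (t : EReal) < b →
        A t * P.eval t = B t * G.eval t - (t - E) * Q.eval t)
    (hBE : B E ≠ 0)
    (hcommon : ∀ r : ℝ, ¬(G.eval r = 0 ∧ P.eval r = 0)) :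
    (∃ s : Finset ℕ, s ⊆ Finset.range (n - 1) ∧ n - 2 ≤ s.card ∧
      ∀ k ∈ s, ∃ r : ℝ, P.eval r = 0 ∧ x k < r ∧ r < x (k + 1)) ∧
    (∀ z : ℕ → ℝ, (∀ i j : ℕ, i < j → j < n → z i < z j) →
      (∀ r : ℝ, P.eval r = 0 ↔ ∃ i < n, z i = r) →
      ∀ k < n - 1, x k < z k → z k < E → E < z (k + 1) → z (k + 1) < x (k + 1) →
        (∀ i ≤ k, x i < z i) ∧ (∀ i < k, z i < x (i + 1)) ∧
        (∀ i : ℕ, k < i → i < n → z i < x i) ∧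
        (∀ i : ℕ, k < i → i + 1 < n → x i < z (i + 1))) := by
  classical
  have hQeval : ∀ t : ℝ, Q.eval t = ∏ i ∈ Finset.range (n + 1), (t - y i) :=
    eval_eq_prod Q (n + 1) y (fun i j hij hj => hy i j hij (by omega)) hQmonic hQdeg
      (fun r => by rw [hQroots r]; simp [Nat.lt_succ_iff])
  have hQsign : ∀ j, j < n → 0 < (-1 : ℝ) ^ (n - j) * Q.eval (x j) := by
    intro j hj
    have h := sign_prod (n + 1) (j + 1) y (x j) (by omega)
      (fun i hi => by
        rcases eq_or_lt_of_le (Nat.lt_succ_iff.1 hi) with h' | h'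
        · exact h' ▸ hQG1 j hj
        · exact lt_trans (hy i j h' (by omega)) (hQG1 j hj))
      (fun i hi1 hi2 => by
        rcases eq_or_lt_of_le hi1 with h' | h'
        · exact h' ▸ hQG2 j hj
        · exact lt_trans (hQG2 j hj) (hy (j + 1) i h' (by omega)))
    have he : n + 1 - (j + 1) = n - j := by omega
    rw [he, ← hQeval] at h
    exact h
  have hApos' : ∀ j, j < n → 0 < A (x j) := fun j hj => hApos _ (hxab j hj).1 (hxab j hj).2
  have hPQ : ∀ j, j < n → A (x j) * P.eval (x j) = (E - x j) * Q.eval (x j) := by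
    intro j hj
    have h := hrel (x j) (hxab j hj).1 (hxab j hj).2
    have hG0 : G.eval (x j) = 0 := (hGroots _).2 ⟨j, hj, rfl⟩
    rw [hG0, mul_zero, zero_sub] at h
    linear_combination h
  have hEne : ∀ j, j < n → E ≠ x j := by
    intro j hj heq
    have h := hPQ j hj
    rw [heq, sub_self, zero_mul] at h
    rcases mul_eq_zero.1 h with h' | h'
    · exact absurd h' (ne_of_gt (hApos' j hj))
    · exact hcommon (x j) ⟨(hGroots _).2 ⟨j, hj, rfl⟩, h'⟩
  have hPP : ∀ j, j + 1 < n → 0 < (E - x j) * (E - x (j + 1)) →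
      P.eval (x j) * P.eval (x (j + 1)) < 0 := by
    intro j hj hside
    have h1 := hQsign j (by omega)
    have h2 := hQsign (j + 1) hj
    have hpw : (-1 : ℝ) ^ (n - j) = -(-1 : ℝ) ^ (n - (j + 1)) := by
      have he : n - j = (n - (j + 1)) + 1 := by omega
      rw [he, pow_succ]; ring
    rw [hpw] at h1
    have hQQ : Q.eval (x j) * Q.eval (x (j + 1)) < 0 := by
      nlinarith [mul_pos h1 h2, neg_one_pow_mul_self (n - (j + 1))]
    have r1 := hPQ j (by omega)
    have r2 := hPQ (j + 1) hj
    have a1 := hApos' j (by omega)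
    have a2 := hApos' (j + 1) hj
    have h3 : (A (x j) * A (x (j + 1))) * (P.eval (x j) * P.eval (x (j + 1)))
        = ((E - x j) * (E - x (j + 1))) * (Q.eval (x j) * Q.eval (x (j + 1))) := by
      linear_combination (A (x (j + 1)) * P.eval (x (j + 1))) * r1
        + ((E - x j) * Q.eval (x j)) * r2
    by_contra hcon
    push_neg at hcon
    have hL : 0 ≤ (A (x j) * A (x (j + 1))) * (P.eval (x j) * P.eval (x (j + 1))) :=
      mul_nonneg (le_of_lt (mul_pos a1 a2)) hcon
    have hR : ((E - x j) * (E - x (j + 1))) * (Q.eval (x j) * Q.eval (x (j + 1))) < 0 :=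
      mul_neg_of_pos_of_neg hside hQQ
    linarith [h3 ▸ hL]
  constructor
  · refine ⟨(Finset.range (n - 1)).filter
      (fun j => ∃ r : ℝ, P.eval r = 0 ∧ x j < r ∧ r < x (j + 1)),
      Finset.filter_subset _ _, ?_, fun k hk => (Finset.mem_filter.1 hk).2⟩
    have hcomp : ∀ j ∈ (Finset.range (n - 1)).filter
        (fun j => ¬ ∃ r : ℝ, P.eval r = 0 ∧ x j < r ∧ r < x (j + 1)),
        x j < E ∧ E < x (j + 1) := by
      intro j hj
      obtain ⟨hjr, hnr⟩ := Finset.mem_filter.1 hj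
      rw [Finset.mem_range] at hjr
      have hj1 : j + 1 < n := by omega
      by_contra hcon
      have hside : 0 < (E - x j) * (E - x (j + 1)) := by
        have h1 := hEne j (by omega)
        have h2 := hEne (j + 1) hj1
        have h3 := hx j (j + 1) (Nat.lt_succ_self j) hj1
        rcases lt_trichotomy E (x j) with h | h | h
        · nlinarith
        · exact absurd h h1
        · rcases lt_trichotomy E (x (j + 1)) with h' | h' | h'
          · exact absurd ⟨h, h'⟩ hcon
          · exact absurd h' h2
          · nlinarith
      obtain ⟨r, hr⟩ := ivt_root P (x j) (x (j + 1)) (hx j (j + 1) (Nat.lt_succ_self j) hj1)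
        (hPP j hj1 hside)
      exact hnr ⟨r, hr⟩
    have hone : ((Finset.range (n - 1)).filter
        (fun j => ¬ ∃ r : ℝ, P.eval r = 0 ∧ x j < r ∧ r < x (j + 1))).card ≤ 1 := by
      apply Finset.card_le_one.2
      intro a1 ha1 a2 ha2
      have h1 := hcomp a1 ha1
      have h2 := hcomp a2 ha2
      have ha1' := Finset.mem_range.1 (Finset.mem_filter.1 ha1).1
      have ha2' := Finset.mem_range.1 (Finset.mem_filter.1 ha2).1
      by_contra hne
      rcases Nat.lt_or_ge a1 a2 with h | h
      · have hle : x (a1 + 1) ≤ x a2 := by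
          rcases eq_or_lt_of_le (Nat.succ_le_of_lt h) with h' | h'
          · exact le_of_eq (congrArg x h')
          · exact le_of_lt (hx _ _ h' (by omega))
        linarith [h1.2, h2.1]
      · have h' : a2 < a1 := lt_of_le_of_ne h (Ne.symm hne)
        have hle : x (a2 + 1) ≤ x a1 := by
          rcases eq_or_lt_of_le (Nat.succ_le_of_lt h') with h'' | h''
          · exact le_of_eq (congrArg x h'')
          · exact le_of_lt (hx _ _ h'' (by omega))
        linarith [h2.2, h1.1]
    have htot := Finset.card_filter_add_card_filter_not
      (s := Finset.range (n - 1))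
      (p := fun j => ∃ r : ℝ, P.eval r = 0 ∧ x j < r ∧ r < x (j + 1))
    rw [Finset.card_range] at htot
    omega
  · intro z hz hzroots k hk hxzk hzkE hEzk1 hzk1x
    have hk1 : k + 1 < n := by omega
    have hPeval : ∀ t : ℝ, P.eval t = ∏ i ∈ Finset.range n, (t - z i) :=
      eval_eq_prod P n z hz hPmonic hPdeg hzroots
    have hzne : ∀ i, i < n → ∀ j, j < n → z i ≠ x j := by
      intro i hi j hj heq
      exact hcommon (x j) ⟨(hGroots _).2 ⟨j, hj, rfl⟩, heq ▸ (hzroots _).2 ⟨i, hi, rfl⟩⟩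
    set m : ℕ → ℕ := fun j => ((Finset.range n).filter (fun i => z i < x j)).card with hmdef
    have hfil : ∀ j : ℕ, (Finset.range n).filter (fun i => z i < x j) = Finset.range (m j) := by
      intro j
      exact dc_eq_range _ (by
        intro i2 hi2 i1 hi1
        simp only [Finset.mem_filter, Finset.mem_range] at hi2 ⊢
        exact ⟨by omega, lt_trans (hz i1 i2 hi1 hi2.1) hi2.2⟩)
    have hmle : ∀ j, m j ≤ n := by
      intro j
      simp only [hmdef]
      simpa using Finset.card_filter_le (Finset.range n) (fun i => z i < x j)
    have hthr1 : ∀ j, ∀ i, i < m j → z i < x j := by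
      intro j i hi
      have hmem : i ∈ (Finset.range n).filter (fun i => z i < x j) := by
        rw [hfil j]; exact Finset.mem_range.2 hi
      exact (Finset.mem_filter.1 hmem).2
    have hthr2 : ∀ j, j < n → ∀ i, m j ≤ i → i < n → x j < z i := by
      intro j hj i hmi hi
      have hni : i ∉ (Finset.range n).filter (fun i => z i < x j) := by
        rw [hfil j, Finset.mem_range]; omega
      have hnlt : ¬ z i < x j := fun hlt =>
        hni (Finset.mem_filter.2 ⟨Finset.mem_range.2 hi, hlt⟩)
      rcases lt_trichotomy (x j) (z i) with h | h | h
      · exact h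
      · exact absurd h.symm (hzne i hi j hj)
      · exact absurd h hnlt
    have hPsign : ∀ j, j < n → 0 < (-1 : ℝ) ^ (n - m j) * P.eval (x j) := by
      intro j hj
      have h := sign_prod n (m j) z (x j) (hmle j) (hthr1 j) (hthr2 j hj)
      rwa [← hPeval] at h
    have hkey : ∀ j, j < n →
        0 < ((-1 : ℝ) ^ (n - m j) * (-1 : ℝ) ^ (n - j)) * (E - x j) := by
      intro j hj
      have h1 := hPsign j hj
      have h2 := hQsign j hj
      have h3 := hPQ j hj
      have hA' := hApos' j hj
      have hq0 : Q.eval (x j) ≠ 0 := by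
        intro h0; rw [h0, mul_zero] at h2; exact lt_irrefl 0 h2
      have h5 : ((-1 : ℝ) ^ (n - m j) * P.eval (x j)) * A (x j) *
          ((-1 : ℝ) ^ (n - j) * Q.eval (x j))
          = (((-1 : ℝ) ^ (n - m j) * (-1 : ℝ) ^ (n - j)) * (E - x j)) *
            (Q.eval (x j) * Q.eval (x j)) := by
        linear_combination ((-1 : ℝ) ^ (n - m j) * (-1 : ℝ) ^ (n - j) * Q.eval (x j)) * h3
      have hT : 0 < (((-1 : ℝ) ^ (n - m j) * (-1 : ℝ) ^ (n - j)) * (E - x j)) *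
          (Q.eval (x j) * Q.eval (x j)) := by
        rw [← h5]
        exact mul_pos (mul_pos h1 hA') h2
      have hq2 : 0 < Q.eval (x j) * Q.eval (x j) := mul_self_pos.2 hq0
      by_contra hcon
      push_neg at hcon
      nlinarith
    have hxElt : ∀ j, j ≤ k → x j < E := by
      intro j hj
      rcases eq_or_lt_of_le hj with h | h
      · rw [h]; linarith
      · linarith [hx j k h (by omega)]
    have hExlt : ∀ j, k < j → j < n → E < x j := by
      intro j h1 h2
      rcases eq_or_lt_of_le (Nat.succ_le_of_lt h1) with h | h
      · rw [← h]; linarith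
      · linarith [hx (k + 1) j h h2]
    have hmono : ∀ j, j + 1 < n → m j ≤ m (j + 1) := by
      intro j hj
      simp only [hmdef]
      apply Finset.card_le_card
      intro i hi
      obtain ⟨h1, h2⟩ := Finset.mem_filter.1 hi
      exact Finset.mem_filter.2 ⟨h1, lt_trans h2 (hx j (j + 1) (Nat.lt_succ_self j) hj)⟩
    have hstep : ∀ j, j + 1 < n → j ≠ k → m j < m (j + 1) := by
      intro j hj hne
      rcases eq_or_lt_of_le (hmono j hj) with heq | h
      · exfalso
        have h1 := hkey j (by omega)
        have h2 := hkey (j + 1) hj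
        rw [← heq] at h2
        have hpw : (-1 : ℝ) ^ (n - j) = -(-1 : ℝ) ^ (n - (j + 1)) := by
          have he : n - j = (n - (j + 1)) + 1 := by omega
          rw [he, pow_succ]; ring
        rw [hpw] at h1
        have hside : 0 < (E - x j) * (E - x (j + 1)) := by
          rcases Nat.lt_or_ge j k with h' | h'
          · have q1 := hxElt j (le_of_lt h')
            have q2 := hxElt (j + 1) h'
            nlinarith
          · have h'' : k < j := lt_of_le_of_ne h' (Ne.symm hne)
            have q1 := hExlt j h'' (by omega)
            have q2 := hExlt (j + 1) (by omega) hj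
            nlinarith
        set d : ℝ := (-1 : ℝ) ^ (n - m j) with hd
        set c : ℝ := (-1 : ℝ) ^ (n - (j + 1)) with hc
        have hdd : d * d = 1 := neg_one_pow_mul_self _
        have hcc : c * c = 1 := neg_one_pow_mul_self _
        have e1 : (d * -c) * (E - x j) * ((d * c) * (E - x (j + 1)))
            = -((E - x j) * (E - x (j + 1))) := by
          linear_combination (-(E - x j) * (E - x (j + 1)) * (d * d)) * hcc
            + (-(E - x j) * (E - x (j + 1))) * hdd
        have hprod := mul_pos h1 h2
        rw [e1] at hprod
        linarith
      · exact h
    have hmk : m k ≤ k := by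
      have hsub : (Finset.range n).filter (fun i => z i < x k) ⊆ Finset.range k := by
        intro i hi
        obtain ⟨hi1, hi2⟩ := Finset.mem_filter.1 hi
        rw [Finset.mem_range] at hi1 ⊢
        by_contra h
        push_neg at h
        have hle : z k ≤ z i := by
          rcases eq_or_lt_of_le h with h' | h'
          · exact le_of_eq (congrArg z h')
          · exact le_of_lt (hz k i h' hi1)
        linarith
      have := Finset.card_le_card hsub
      rw [Finset.card_range] at this
      simpa only [hmdef] using this
    have hmk1 : k + 2 ≤ m (k + 1) := by
      have hsub : Finset.range (k + 2) ⊆ (Finset.range n).filter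
          (fun i => z i < x (k + 1)) := by
        intro i hi
        rw [Finset.mem_range] at hi
        refine Finset.mem_filter.2 ⟨Finset.mem_range.2 (by omega), ?_⟩
        have hle : z i ≤ z (k + 1) := by
          rcases eq_or_lt_of_le (Nat.lt_succ_iff.1 hi) with h' | h'
          · exact le_of_eq (congrArg z h')
          · exact le_of_lt (hz i (k + 1) h' hk1)
        linarith
      have := Finset.card_le_card hsub
      rw [Finset.card_range] at this
      simpa only [hmdef] using this
    have hup1 : ∀ j, j ≤ k → j ≤ m j := by
      intro j
      induction j with
      | zero => intro _; exact Nat.zero_le _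
      | succ i ih =>
        intro hik
        have h1 := ih (by omega)
        have h2 := hstep i (by omega) (by omega)
        omega
    have hdown1 : ∀ d, d ≤ k → m (k - d) ≤ k - d := by
      intro d
      induction d with
      | zero => intro _; simpa using hmk
      | succ i ih =>
        intro hik
        have h1 := ih (by omega)
        have h2 := hstep (k - (i + 1)) (by omega) (by omega)
        have he : k - (i + 1) + 1 = k - i := by omega
        rw [he] at h2
        omega
    have hval1 : ∀ j, j ≤ k → m j = j := by
      intro j hj
      have h1 := hup1 j hj
      have h2 := hdown1 (k - j) (by omega)
      have he : k - (k - j) = j := by omega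
      rw [he] at h2
      omega
    have hup2 : ∀ j, k + 1 ≤ j → j < n → j + 1 ≤ m j := by
      intro j
      induction j with
      | zero => omega
      | succ i ih =>
        intro h1 h2
        rcases Nat.lt_or_ge k i with h | h
        · have h3 := ih (by omega) (by omega)
          have h4 := hstep i (by omega) (by omega)
          omega
        · have he : i = k := by omega
          rw [he]
          exact hmk1
    have hdown2 : ∀ d, d ≤ n - 1 - (k + 1) → m (n - 1 - d) ≤ n - d := by
      intro d
      induction d with
      | zero => intro _; simpa using hmle (n - 1)
      | succ i ih =>
        intro hd
        have h1 := ih (by omega)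
        have h2 := hstep (n - 1 - (i + 1)) (by omega) (by omega)
        have he : n - 1 - (i + 1) + 1 = n - 1 - i := by omega
        rw [he] at h2
        omega
    have hval2 : ∀ j, k + 1 ≤ j → j < n → m j = j + 1 := by
      intro j h1 h2
      have hu := hup2 j h1 h2
      have hd := hdown2 (n - 1 - j) (by omega)
      have he : n - 1 - (n - 1 - j) = j := by omega
      rw [he] at hd
      omega
    refine ⟨?_, ?_, ?_, ?_⟩
    · intro i hi
      have h1 := hval1 i hi
      exact hthr2 i (by omega) i (le_of_eq h1) (by omega)
    · intro i hi
      have h1 := hval1 (i + 1) (by omega)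
      exact hthr1 (i + 1) i (by omega)
    · intro i h1 h2
      have h3 := hval2 i h1 h2
      exact hthr1 i i (by omega)
    · intro i h1 h2
      have h3 := hval2 i h1 (by omega)
      exact hthr2 i (by omega) (i + 1) (by omega) h2
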